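/- Let D be a positive definite matrix. The solution B to the equation (DX + XD)/2 = B is given by X = ∫₀^∞ exp(−tD/2) B exp(−tD/2) dt; that is, the inverse of the map J_D : X ↦ (DX+XD)/2 is B ↦ ∫₀^∞ e^{−tD/2} B e^{−tD/2} dt. -/

import Mathlib

open Matrix
open scoped ComplexOrder

/-- `f` applied to a Hermitian matrix via the spectral theorem. -/
noncomputable def hermApply {n : ℕ} (f : ℝ → ℝ) (A : Matrix (Fin n) (Fin n) ℂ)
    (hA : A.IsHermitian) : Matrix (Fin n) (Fin n) ℂ :=
  (hA.eigenvectorUnitary : Matrix (Fin n) (Fin n) ℂ) *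
    Matrix.diagonal (fun i => ((f (hA.eigenvalues i) : ℝ) : ℂ)) *
    (star hA.eigenvectorUnitary : Matrix (Fin n) (Fin n) ℂ)

open MeasureTheory in
lemma expInt {c : ℝ} (hc : 0 < c) :
    ∫ t in Set.Ioi (0:ℝ), Real.exp (-(c * t)) = c⁻¹ := by
  have h := integral_comp_mul_left_Ioi (fun x => Real.exp (-x)) 0 hc
  simp only [mul_zero, integral_exp_neg_Ioi, neg_zero, Real.exp_zero, smul_eq_mul, mul_one] at h
  exact h

open MeasureTheory

set_option maxHeartbeats 2000000

/-- for a positive definite `D`, the inverse of the map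
`J_D : X ↦ (DX + XD)/2` is `B ↦ ∫₀^∞ e^{-tD/2} B e^{-tD/2} dt`
(the integral being taken entrywise). -/
theorem stmt4 {n : ℕ} (D : Matrix (Fin n) (Fin n) ℂ) (hD : D.PosDef)
    (JD K : Matrix (Fin n) (Fin n) ℂ → Matrix (Fin n) (Fin n) ℂ)
    (hJD : ∀ X, JD X = (1 / 2 : ℂ) • (D * X + X * D))
    (hK : ∀ B, K B = Matrix.of fun i j => ∫ t in Set.Ioi (0 : ℝ),
      (hermApply (fun x => Real.exp (-(t * x) / 2)) D hD.1 * B *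
        hermApply (fun x => Real.exp (-(t * x) / 2)) D hD.1) i j) :
    ∀ B, JD (K B) = B ∧ K (JD B) = B := by
  set U : Matrix (Fin n) (Fin n) ℂ := (hD.1.eigenvectorUnitary : Matrix (Fin n) (Fin n) ℂ) with hU
  set lam : Fin n → ℝ := hD.1.eigenvalues with hlam
  have hpos : ∀ i, 0 < lam i := hD.eigenvalues_pos
  have hUU : U * star U = 1 := Matrix.mem_unitaryGroup_iff.mp hD.1.eigenvectorUnitary.2
  have hUU' : star U * U = 1 := Matrix.mem_unitaryGroup_iff'.mp hD.1.eigenvectorUnitary.2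
  have hspec : D = U * Matrix.diagonal (fun i => (lam i : ℂ)) * star U := hD.1.spectral_theorem
  set Φ : Matrix (Fin n) (Fin n) ℂ → Matrix (Fin n) (Fin n) ℂ := fun M => U * M * star U with hΦ
  have hΦΨ : ∀ X, Φ (star U * X * U) = X := by
    intro X
    simp only [hΦ]
    calc U * (star U * X * U) * star U = (U * star U) * X * (U * star U) := by
          simp only [Matrix.mul_assoc]
      _ = X := by rw [hUU]; simp
  have entry : ∀ (A : Matrix (Fin n) (Fin n) ℂ) (i j : Fin n),
      (U * A * star U) i j = ∑ p, ∑ q, U i p * A p q * (star U) q j := by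
    intro A i j
    simp only [Matrix.mul_apply, Finset.sum_mul]
    rw [Finset.sum_comm]
  -- Claim 1
  have claim1 : ∀ M, JD (Φ M) =
      Φ (Matrix.of fun i j => (((lam i + lam j) / 2 : ℝ) : ℂ) * M i j) := by
    intro M
    rw [hJD]
    have h1 : D * Φ M = Φ (Matrix.diagonal (fun i => (lam i : ℂ)) * M) := by
      simp only [hΦ]
      rw [hspec]
      calc U * Matrix.diagonal (fun i => (lam i : ℂ)) * star U * (U * M * star U)
          = U * Matrix.diagonal (fun i => (lam i : ℂ)) * (star U * U) * M * star U := by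
            simp only [Matrix.mul_assoc]
        _ = U * (Matrix.diagonal (fun i => (lam i : ℂ)) * M) * star U := by
            rw [hUU']; simp [Matrix.mul_assoc]
    have h2 : Φ M * D = Φ (M * Matrix.diagonal (fun i => (lam i : ℂ))) := by
      simp only [hΦ]
      rw [hspec]
      calc U * M * star U * (U * Matrix.diagonal (fun i => (lam i : ℂ)) * star U)
          = U * M * (star U * U) * Matrix.diagonal (fun i => (lam i : ℂ)) * star U := by
            simp only [Matrix.mul_assoc]
        _ = U * (M * Matrix.diagonal (fun i => (lam i : ℂ))) * star U := by
            rw [hUU']; simp [Matrix.mul_assoc]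
    rw [h1, h2]
    have h3 : (1/2:ℂ) • (Φ (Matrix.diagonal (fun i => (lam i : ℂ)) * M) +
        Φ (M * Matrix.diagonal (fun i => (lam i : ℂ)))) =
        Φ ((1/2:ℂ) • (Matrix.diagonal (fun i => (lam i : ℂ)) * M +
          M * Matrix.diagonal (fun i => (lam i : ℂ)))) := by
      simp only [hΦ, Matrix.mul_add, Matrix.add_mul, Matrix.smul_mul, Matrix.mul_smul, smul_add]
    rw [h3]
    refine congrArg Φ ?_
    ext i j
    simp only [Matrix.smul_apply, Matrix.add_apply, Matrix.diagonal_mul, Matrix.mul_diagonal,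
      Matrix.of_apply, smul_eq_mul]
    push_cast
    ring
  -- Claim 2
  have claim2 : ∀ M, K (Φ M) =
      Φ (Matrix.of fun i j => ((2 / (lam i + lam j) : ℝ) : ℂ) * M i j) := by
    intro M
    rw [hK]
    ext i j
    simp only [Matrix.of_apply]
    have hintg : ∀ t : ℝ,
        (hermApply (fun x => Real.exp (-(t * x) / 2)) D hD.1 * Φ M *
          hermApply (fun x => Real.exp (-(t * x) / 2)) D hD.1) i j =
        ∑ p, ∑ q, (U i p * M p q * (star U) q j) *
          ((Real.exp (-(((lam p + lam q) / 2) * t)) : ℝ) : ℂ) := by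
      intro t
      have hherm : hermApply (fun x => Real.exp (-(t * x) / 2)) D hD.1 =
          U * Matrix.diagonal (fun p => ((Real.exp (-(t * lam p) / 2) : ℝ) : ℂ)) * star U := rfl
      rw [hherm]
      have hmid : U * Matrix.diagonal (fun p => ((Real.exp (-(t * lam p) / 2) : ℝ) : ℂ)) * star U *
          Φ M * (U * Matrix.diagonal (fun p => ((Real.exp (-(t * lam p) / 2) : ℝ) : ℂ)) * star U)
          = U * (Matrix.diagonal (fun p => ((Real.exp (-(t * lam p) / 2) : ℝ) : ℂ)) * M *
              Matrix.diagonal (fun p => ((Real.exp (-(t * lam p) / 2) : ℝ) : ℂ))) * star U := by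
        simp only [hΦ]
        calc U * Matrix.diagonal (fun p => ((Real.exp (-(t * lam p) / 2) : ℝ) : ℂ)) * star U *
            (U * M * star U) *
            (U * Matrix.diagonal (fun p => ((Real.exp (-(t * lam p) / 2) : ℝ) : ℂ)) * star U)
            = U * Matrix.diagonal (fun p => ((Real.exp (-(t * lam p) / 2) : ℝ) : ℂ)) *
              (star U * U) * M * (star U * U) *
              Matrix.diagonal (fun p => ((Real.exp (-(t * lam p) / 2) : ℝ) : ℂ)) * star U := by
              simp only [Matrix.mul_assoc]
          _ = _ := by rw [hUU']; simp [Matrix.mul_assoc]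
      rw [hmid, entry]
      refine Finset.sum_congr rfl fun p _ => Finset.sum_congr rfl fun q _ => ?_
      rw [Matrix.mul_diagonal, Matrix.diagonal_mul,
        show -(((lam p + lam q) / 2) * t) = -(t * lam p) / 2 + -(t * lam q) / 2 by ring,
        Real.exp_add]
      push_cast
      ring
    have hintegrable : ∀ p q : Fin n, IntegrableOn
        (fun t : ℝ => (U i p * M p q * (star U) q j) *
          ((Real.exp (-(((lam p + lam q) / 2) * t)) : ℝ) : ℂ)) (Set.Ioi 0) := by
      intro p q
      have h1 : IntegrableOn (fun t : ℝ => Real.exp (-((lam p + lam q) / 2) * t))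
          (Set.Ioi (0:ℝ)) := exp_neg_integrableOn_Ioi 0 (half_pos (add_pos (hpos p) (hpos q)))
      have h2 := (h1.ofReal (𝕜 := ℂ)).const_mul (U i p * M p q * (star U) q j)
      simpa [neg_mul, IntegrableOn] using h2
    rw [MeasureTheory.integral_congr_ae (Filter.Eventually.of_forall hintg),
      MeasureTheory.integral_finset_sum _
        (fun p _ => integrable_finset_sum _ (fun q _ => hintegrable p q))]
    simp only [hΦ]
    rw [entry]
    refine Finset.sum_congr rfl fun p _ => ?_
    rw [MeasureTheory.integral_finset_sum _ (fun q _ => hintegrable p q)]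
    refine Finset.sum_congr rfl fun q _ => ?_
    have hcast : (∫ a in Set.Ioi (0:ℝ), ((Real.exp (-((lam p + lam q) / 2 * a)) : ℝ) : ℂ)) =
        ((∫ a in Set.Ioi (0:ℝ), Real.exp (-((lam p + lam q) / 2 * a)) : ℝ) : ℂ) := integral_ofReal
    rw [MeasureTheory.integral_const_mul, hcast,
      expInt (half_pos (add_pos (hpos p) (hpos q))), inv_div]
    simp only [Matrix.of_apply]
    ring
  -- conclude
  intro B
  have hB : B = Φ (star U * B * U) := (hΦΨ B).symm
  have hne : ∀ i j : Fin n, ((lam i : ℂ) + (lam j : ℂ)) ≠ 0 := by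
    intro i j
    have : (lam i + lam j) ≠ 0 := ne_of_gt (add_pos (hpos i) (hpos j))
    exact_mod_cast this
  constructor
  · conv_lhs => rw [hB]
    rw [claim2, claim1]
    conv_rhs => rw [hB]
    refine congrArg Φ ?_
    ext i j
    simp only [Matrix.of_apply]
    push_cast
    field_simp [hne i j]
  · conv_lhs => rw [hB]
    rw [claim1, claim2]
    conv_rhs => rw [hB]
    refine congrArg Φ ?_
    ext i j
    simp only [Matrix.of_apply]
    push_cast
    field_simp [hne i j]
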